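/- Let p, q > 0 with p^(-l) ≠ q^l, let α, β, l be real with α ≠ 0, set k = l/α, and let f : ℝ → ℝ. Then for every z > 0 the relation a a⁺ − p^(-l) a⁺ a = q^(αN+β) holds pointwise: D(w ↦ w^k f(w))(z) − p^(-l) · z^k · (D f)(z) = q^(β) · f(q^(α) z), where (D g)(z) = (g(p^(-α) z) p^(-β) − g(q^α z) q^β) / ((p^(-l) − q^l) z^k) and all powers are real powers. -/

import Mathlib

/-- The relation `a a⁺ − p^(-l) a⁺ a = q^(αN+β)` holds pointwise in the realization
by difference operators. -/
theorem relation_p (p q α β l : ℝ) (hp : 0 < p) (hq : 0 < q)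
    (hα : α ≠ 0) (h : p ^ (-l) ≠ q ^ l) (k : ℝ) (hk : k = l / α)
    (f : ℝ → ℝ)
    (D : (ℝ → ℝ) → ℝ → ℝ)
    (hD : ∀ (g : ℝ → ℝ) (w : ℝ), D g w =
      (g (p ^ (-α) * w) * p ^ (-β) - g (q ^ α * w) * q ^ β) /
        ((p ^ (-l) - q ^ l) * w ^ k))
    (z : ℝ) (hz : 0 < z) :
    D (fun w => w ^ k * f w) z - p ^ (-l) * (z ^ k * D f z) =
      q ^ β * f (q ^ α * z) := by
  have hαk : α * k = l := by rw [hk]; field_simp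
  have h1 : (p ^ (-α) * z) ^ k = p ^ (-l) * z ^ k := by
    rw [Real.mul_rpow (Real.rpow_pos_of_pos hp _).le hz.le,
      ← Real.rpow_mul hp.le, neg_mul, hαk]
  have h2 : (q ^ α * z) ^ k = q ^ l * z ^ k := by
    rw [Real.mul_rpow (Real.rpow_pos_of_pos hq _).le hz.le,
      ← Real.rpow_mul hq.le, hαk]
  have hne : p ^ (-l) - q ^ l ≠ 0 := sub_ne_zero.mpr h
  have hzk : z ^ k ≠ 0 := (Real.rpow_pos_of_pos hz _).ne'
  rw [hD, hD]
  simp only [h1, h2]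
  field_simp
  ring
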